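/- Under the Harten setup, regard Ŝ, Ŵ, F̂^{(i)}, Ĝ^{(i)} as functions of the conservative variables U = (ρ, m, e) on the open set D = {(ρ, m, e) : ρ > 0, (γ−1)(e − ‖m‖²/(2ρ)) > 0}, via V = m/ρ and p = (γ−1)(e − ‖m‖²/(2ρ)). Then for every U ∈ D, every i ∈ {1,…,d}, and every direction v ∈ ℝ^{d+2}: ⟨Ŵ(U), DF̂^{(i)}(U)·v⟩ = DĜ^{(i)}(U)·v, i.e. the transpose of the Euler flux Jacobian applied to Harten's entropy variables equals the gradient of the entropy flux: (DF̂^{(i)}(U))^T Ŵ(U) = ∇Ĝ^{(i)}(U). -/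

import Mathlib

/-- Harten's entropy function `S = β·ρ·(p·ρ^(−γ))^(1/(α+γ))`. -/
noncomputable def hartenS (γ α β ρ p : ℝ) : ℝ :=
  β * ρ * (p * ρ ^ (-γ)) ^ (1 / (α + γ))

/-- Harten's entropy variables. -/
noncomputable def hartenW (d : ℕ) (γ α ρ p : ℝ) (V : Fin d → ℝ) : Fin (d + 2) → ℝ :=
  fun j =>
    (ρ / p) * (p * ρ ^ (-γ)) ^ (1 / (α + γ)) *
      (Fin.cons (α := fun _ => ℝ) (-(α / (γ - 1)) * (p / ρ) - (∑ i, V i ^ 2) / 2)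
        (Fin.snoc V (-1)) j)

/-- The Euler flux `F^(i) = (ρV_i, ρV_iV + p·e_i, (e+p)V_i) ∈ ℝ^(d+2)`. -/
noncomputable def eulerFlux (d : ℕ) (γ ρ p : ℝ) (V : Fin d → ℝ) (i : Fin d) :
    Fin (d + 2) → ℝ :=
  Fin.cons (α := fun _ => ℝ) (ρ * V i)
    (Fin.snoc (fun j => ρ * V i * V j + p * (if j = i then 1 else 0))
      ((p / (γ - 1) + ρ * (∑ k, V k ^ 2) / 2 + p) * V i))

/-- Pressure as a function of the conservative variables `U = (ρ, m, e)`. -/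
noncomputable def pOf (d : ℕ) (γ : ℝ) (U : Fin (d + 2) → ℝ) : ℝ :=
  (γ - 1) * (U (Fin.last (d + 1)) -
    (∑ i : Fin d, U (Fin.castSucc (Fin.succ i)) ^ 2) / (2 * U 0))

/-- Velocity `V = m/ρ` as a function of the conservative variables. -/
noncomputable def vOf (d : ℕ) (U : Fin (d + 2) → ℝ) : Fin d → ℝ :=
  fun i => U (Fin.castSucc (Fin.succ i)) / U 0

/-- Euler flux `F̂^(i)` as a function of the conservative variables. -/
noncomputable def fluxHat (d : ℕ) (γ : ℝ) (i : Fin d) (U : Fin (d + 2) → ℝ) :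
    Fin (d + 2) → ℝ :=
  eulerFlux d γ (U 0) (pOf d γ U) (vOf d U) i

/-- Entropy flux `Ĝ^(i) = V_i·Ŝ` as a function of the conservative variables. -/
noncomputable def entropyFluxHat (d : ℕ) (γ α β : ℝ) (i : Fin d)
    (U : Fin (d + 2) → ℝ) : ℝ :=
  vOf d U i * hartenS γ α β (U 0) (pOf d γ U)

/-- Harten's entropy variables `Ŵ` as a function of the conservative variables. -/
noncomputable def hartenWhat (d : ℕ) (γ α : ℝ) (U : Fin (d + 2) → ℝ) :
    Fin (d + 2) → ℝ :=
  hartenW d γ α (U 0) (pOf d γ U) (vOf d U)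

/-- Under the Harten setup, for every conservative state `U` in
`D = {(ρ, m, e) : ρ > 0, (γ−1)(e − ‖m‖²/(2ρ)) > 0}`, every `i` and every direction
`v`: `⟨Ŵ(U), DF̂^(i)(U)·v⟩ = DĜ^(i)(U)·v`, i.e. the transpose of the Euler flux
Jacobian applied to Harten's entropy variables equals the gradient of the entropy
flux. -/
lemma diffAt_div {n : ℕ} {f g : (Fin n → ℝ) → ℝ} {x : Fin n → ℝ}
    (hf : DifferentiableAt ℝ f x) (hg : DifferentiableAt ℝ g x) (hgx : g x ≠ 0) :
    DifferentiableAt ℝ (fun y => f y / g y) x := by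
  simp only [div_eq_mul_inv]; exact hf.mul (hg.inv hgx)

lemma line_fderiv {n : ℕ} (f : (Fin n → ℝ) → ℝ) (U v : Fin n → ℝ)
    (hf : DifferentiableAt ℝ f U) :
    fderiv ℝ f U v = deriv (fun t : ℝ => f (U + t • v)) 0 := by
  have hline : HasDerivAt (fun t : ℝ => U + t • v) v 0 := by
    simpa using (((hasDerivAt_id (0 : ℝ)).smul_const v).const_add U)
  have h2 : HasDerivAt (fun t : ℝ => f (U + t • v)) (fderiv ℝ f U v) 0 := by
    have h4 : HasFDerivAt f (fderiv ℝ f U) ((fun t : ℝ => U + t • v) 0) := by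
      simpa using hf.hasFDerivAt
    exact h4.comp_hasDerivAt 0 hline
  exact h2.deriv.symm

set_option maxHeartbeats 2000000 in
theorem hartenW_dot_flux_jacobian_eq_grad_entropyFlux
    (d : ℕ) (hd : 1 ≤ d) (γ α β : ℝ) (hγ : 1 < γ) (hα : 0 < α ∨ α < -γ)
    (hβ : β = -(γ + α) / (γ - 1))
    (U : Fin (d + 2) → ℝ) (hρ : 0 < U 0) (hp : 0 < pOf d γ U)
    (i : Fin d) (v : Fin (d + 2) → ℝ) :
    (∑ j, hartenWhat d γ α U j * fderiv ℝ (fluxHat d γ i) U v j)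
      = fderiv ℝ (entropyFluxHat d γ α β i) U v := by
  classical
  have hγ1 : γ - 1 ≠ 0 := by linarith
  have hαγ : α + γ ≠ 0 := by rcases hα with h | h
                             · nlinarith
                             · nlinarith
  have hρ0 : U 0 ≠ 0 := ne_of_gt hρ
  have hp0 : pOf d γ U ≠ 0 := ne_of_gt hp
  have hbase : 0 < pOf d γ U * U 0 ^ (-γ) := mul_pos hp (Real.rpow_pos_of_pos hρ _)
  -- coordinate differentiability
  have hDc : ∀ j, DifferentiableAt ℝ (fun W : Fin (d + 2) → ℝ => W j) U := fun j =>
    (ContinuousLinearMap.proj (R := ℝ) (φ := fun _ : Fin (d + 2) => ℝ) j).differentiableAt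
  have hDp : DifferentiableAt ℝ (pOf d γ) U := by
    have h2 : (2 : ℝ) * U 0 ≠ 0 := mul_ne_zero two_ne_zero hρ0
    have hnum : DifferentiableAt ℝ
        (fun W : Fin (d + 2) → ℝ => ∑ k : Fin d, W (Fin.castSucc (Fin.succ k)) ^ 2) U :=
      DifferentiableAt.fun_sum fun k _ => (hDc (Fin.castSucc (Fin.succ k))).fun_pow 2
    have hden : DifferentiableAt ℝ (fun W : Fin (d + 2) → ℝ => 2 * W 0) U :=
      (hDc 0).const_mul 2
    have hq : DifferentiableAt ℝ (fun W : Fin (d + 2) → ℝ =>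
        (∑ k : Fin d, W (Fin.castSucc (Fin.succ k)) ^ 2) / (2 * W 0)) U :=
      diffAt_div hnum hden h2
    exact ((hDc (Fin.last (d + 1))).sub hq).const_mul (γ - 1)
  have hDK : DifferentiableAt ℝ
      (fun W : Fin (d + 2) → ℝ => (pOf d γ W * W 0 ^ (-γ)) ^ (1 / (α + γ))) U :=
    (hDp.mul ((hDc 0).rpow_const (Or.inl hρ0))).rpow_const (Or.inl (ne_of_gt hbase))
  have hDV : ∀ k : Fin d,
      DifferentiableAt ℝ (fun W : Fin (d + 2) → ℝ => W (Fin.castSucc (Fin.succ k)) / W 0) U :=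
    fun k => diffAt_div (hDc (Fin.castSucc (Fin.succ k))) (hDc 0) hρ0
  -- component functions
  have hF0 : (fun W : Fin (d + 2) → ℝ => fluxHat d γ i W 0)
      = fun W => W 0 * (W (Fin.castSucc (Fin.succ i)) / W 0) := by
    funext W; simp [fluxHat, eulerFlux, vOf]
  have hFk : ∀ k : Fin d, (fun W : Fin (d + 2) → ℝ => fluxHat d γ i W (Fin.castSucc (Fin.succ k)))
      = fun W => W 0 * (W (Fin.castSucc (Fin.succ i)) / W 0) * (W (Fin.castSucc (Fin.succ k)) / W 0)
          + pOf d γ W * (if k = i then 1 else 0) := by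
    intro k; funext W
    simp [fluxHat, eulerFlux, vOf, ← Fin.succ_castSucc]
  have hFl : (fun W : Fin (d + 2) → ℝ => fluxHat d γ i W (Fin.last (d + 1)))
      = fun W => (pOf d γ W / (γ - 1)
            + W 0 * (∑ l, (W (Fin.castSucc (Fin.succ l)) / W 0) ^ 2) / 2 + pOf d γ W)
          * (W (Fin.castSucc (Fin.succ i)) / W 0) := by
    funext W
    simp [fluxHat, eulerFlux, vOf, ← Fin.succ_last]
  -- differentiability of components
  have hDF0 : DifferentiableAt ℝ
      (fun W : Fin (d + 2) → ℝ => W 0 * (W (Fin.castSucc (Fin.succ i)) / W 0)) U :=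
    (hDc 0).mul (hDV i)
  have hDFk : ∀ k : Fin d, DifferentiableAt ℝ
      (fun W : Fin (d + 2) → ℝ =>
        W 0 * (W (Fin.castSucc (Fin.succ i)) / W 0) * (W (Fin.castSucc (Fin.succ k)) / W 0)
          + pOf d γ W * (if k = i then 1 else 0)) U :=
    fun k => (((hDc 0).mul (hDV i)).mul (hDV k)).add (hDp.mul_const _)
  have hDFl : DifferentiableAt ℝ
      (fun W : Fin (d + 2) → ℝ => (pOf d γ W / (γ - 1)
            + W 0 * (∑ l, (W (Fin.castSucc (Fin.succ l)) / W 0) ^ 2) / 2 + pOf d γ W)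
          * (W (Fin.castSucc (Fin.succ i)) / W 0)) U :=
    by
    have h1 : DifferentiableAt ℝ (fun W : Fin (d + 2) → ℝ => pOf d γ W / (γ - 1)) U :=
      by simp only [div_eq_mul_inv]; exact hDp.mul_const _
    have h2 : DifferentiableAt ℝ
        (fun W : Fin (d + 2) → ℝ =>
          W 0 * (∑ l, (W (Fin.castSucc (Fin.succ l)) / W 0) ^ 2) / 2) U :=
      by simp only [div_eq_mul_inv]
         exact ((hDc 0).mul (DifferentiableAt.fun_sum fun l _ => (hDV l).fun_pow 2)).mul_const _
    exact ((h1.add h2).add hDp).mul (hDV i)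
  have hDFj : ∀ j, DifferentiableAt ℝ (fun W => fluxHat d γ i W j) U := by
    intro j
    refine Fin.cases ?_ (fun jj => ?_) j
    · rw [hF0]; exact hDF0
    · refine Fin.lastCases ?_ (fun k => ?_) jj
      · rw [Fin.succ_last, hFl]; exact hDFl
      · rw [Fin.succ_castSucc, hFk k]; exact hDFk k
  have hGfun : entropyFluxHat d γ α β i = fun W : Fin (d + 2) → ℝ =>
      (W (Fin.castSucc (Fin.succ i)) / W 0)
        * (β * W 0 * (pOf d γ W * W 0 ^ (-γ)) ^ (1 / (α + γ))) := rfl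
  have hDG : DifferentiableAt ℝ (entropyFluxHat d γ α β i) U := by
    rw [hGfun]; exact (hDV i).mul (((hDc 0).const_mul β).mul hDK)
  -- reduce fderiv of the Pi-valued flux to components
  have hpi : ∀ j, fderiv ℝ (fluxHat d γ i) U v j
      = fderiv ℝ (fun W => fluxHat d γ i W j) U v := by
    intro j
    have h : fderiv ℝ (fluxHat d γ i) U
        = ContinuousLinearMap.pi (fun j => fderiv ℝ (fun W => fluxHat d γ i W j) U) :=
      fderiv_pi hDFj
    rw [h, ContinuousLinearMap.pi_apply]
  -- scalar abbreviations
  set S2 : ℝ := ∑ l, U (Fin.castSucc (Fin.succ l)) ^ 2 with hS2def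
  set T : ℝ := ∑ l, U (Fin.castSucc (Fin.succ l)) * v (Fin.castSucc (Fin.succ l)) with hTdef
  set P' : ℝ := (γ - 1) * (v (Fin.last (d + 1)) - (2 * T * U 0 - S2 * v 0) / (2 * U 0 ^ 2))
    with hP'def
  -- derivatives along the line t ↦ U + t • v
  have hc0 : ∀ j, HasDerivAt (fun t : ℝ => (U + t • v) j) (v j) 0 := by
    intro j
    have he : (fun t : ℝ => (U + t • v) j) = fun t : ℝ => U j + t * v j := by
      funext t; simp
    rw [he]
    simpa using ((hasDerivAt_id (0 : ℝ)).mul_const (v j)).const_add (U j)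
  have hne : (fun t : ℝ => (U + t • v) 0) 0 ≠ 0 := by simpa using hρ0
  have hS2t : HasDerivAt (fun t : ℝ => ∑ l, (U + t • v) (Fin.castSucc (Fin.succ l)) ^ 2)
      (2 * T) 0 := by
    have h := HasDerivAt.fun_sum (u := Finset.univ)
      (fun l _ => (hc0 (Fin.castSucc (Fin.succ l))).fun_pow 2)
    convert h using 1
    · rfl
    · rfl
    rw [hTdef, Finset.mul_sum]
    refine Finset.sum_congr rfl fun l _ => ?_
    simp
    ring
  have hPt : HasDerivAt (fun t : ℝ => pOf d γ (U + t • v)) P' 0 := by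
    have hden : HasDerivAt (fun t : ℝ => 2 * (U + t • v) 0) (2 * v 0) 0 := (hc0 0).const_mul 2
    have hden0 : (fun t : ℝ => 2 * (U + t • v) 0) 0 ≠ 0 := by
      simpa using mul_ne_zero two_ne_zero hρ0
    have h := ((hc0 (Fin.last (d + 1))).fun_sub (hS2t.fun_div hden hden0)).const_mul (γ - 1)
    have hfun : (fun t : ℝ => pOf d γ (U + t • v)) = fun t : ℝ =>
        (γ - 1) * ((U + t • v) (Fin.last (d + 1)) -
          (∑ l, (U + t • v) (Fin.castSucc (Fin.succ l)) ^ 2) / (2 * (U + t • v) 0)) := rfl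
    rw [hfun]
    convert h using 1
    · rfl
    · rfl
    rw [hP'def]
    simp only [zero_smul, Pi.add_apply, Pi.zero_apply, add_zero]
    rw [← hS2def]
    field_simp
  have hfoldDiv : (∑ l, (U (Fin.castSucc (Fin.succ l)) / U 0) ^ 2) = S2 / U 0 ^ 2 := by
    rw [hS2def, Finset.sum_div]
    exact Finset.sum_congr rfl fun l _ => div_pow _ _ 2
  have hd0 : fderiv ℝ (fun W : Fin (d + 2) → ℝ =>
      W 0 * (W (Fin.castSucc (Fin.succ i)) / W 0)) U v = v (Fin.castSucc (Fin.succ i)) := by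
    rw [line_fderiv _ _ _ hDF0]
    have h := (hc0 0).fun_mul ((hc0 (Fin.castSucc (Fin.succ i))).fun_div (hc0 0) hne)
    rw [h.deriv]
    simp only [zero_smul, Pi.add_apply, Pi.zero_apply, add_zero]
    field_simp
    ring
  have hSig : HasDerivAt
      (fun t : ℝ => ∑ l, ((U + t • v) (Fin.castSucc (Fin.succ l)) / (U + t • v) 0) ^ 2)
      (2 * T / U 0 ^ 2 - 2 * S2 * v 0 / U 0 ^ 3) 0 := by
    have h := HasDerivAt.fun_sum (u := Finset.univ)
      (fun l _ => ((hc0 (Fin.castSucc (Fin.succ l))).fun_div (hc0 0) hne).fun_pow 2)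
    convert h using 1
    · rfl
    · rfl
    simp only [zero_smul, Pi.add_apply, Pi.zero_apply, add_zero]
    have e1 : ∀ l : Fin d, ((2 : ℕ) : ℝ) * (U (Fin.castSucc (Fin.succ l)) / U 0) ^ (2 - 1)
        * ((v (Fin.castSucc (Fin.succ l)) * U 0 - U (Fin.castSucc (Fin.succ l)) * v 0) / U 0 ^ 2)
        = (2 / U 0 ^ 2) * (U (Fin.castSucc (Fin.succ l)) * v (Fin.castSucc (Fin.succ l)))
          - (2 * v 0 / U 0 ^ 3) * U (Fin.castSucc (Fin.succ l)) ^ 2 := by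
      intro l; norm_num; field_simp
    rw [Finset.sum_congr rfl (fun l _ => e1 l), Finset.sum_sub_distrib,
      ← Finset.mul_sum, ← Finset.mul_sum, ← hTdef, ← hS2def]
    ring
  have hdk : ∀ k : Fin d, fderiv ℝ (fun W : Fin (d + 2) → ℝ =>
        W 0 * (W (Fin.castSucc (Fin.succ i)) / W 0) * (W (Fin.castSucc (Fin.succ k)) / W 0)
          + pOf d γ W * (if k = i then 1 else 0)) U v
      = (v (Fin.castSucc (Fin.succ i)) * U (Fin.castSucc (Fin.succ k))
          + U (Fin.castSucc (Fin.succ i)) * v (Fin.castSucc (Fin.succ k))) / U 0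
        - U (Fin.castSucc (Fin.succ i)) * U (Fin.castSucc (Fin.succ k)) * v 0 / U 0 ^ 2
        + (if k = i then 1 else 0) * P' := by
    intro k
    rw [line_fderiv _ _ _ (hDFk k)]
    have h := (((hc0 0).fun_mul ((hc0 (Fin.castSucc (Fin.succ i))).fun_div (hc0 0) hne)).fun_mul
        ((hc0 (Fin.castSucc (Fin.succ k))).fun_div (hc0 0) hne)).fun_add
      (hPt.mul_const (if k = i then (1 : ℝ) else 0))
    rw [h.deriv]
    simp only [zero_smul, Pi.add_apply, Pi.zero_apply, add_zero]
    by_cases hk : k = i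
    · simp only [if_pos hk]
      field_simp
      ring
    · simp only [if_neg hk]
      field_simp
      ring
  have hdl : fderiv ℝ (fun W : Fin (d + 2) → ℝ => (pOf d γ W / (γ - 1)
        + W 0 * (∑ l, (W (Fin.castSucc (Fin.succ l)) / W 0) ^ 2) / 2 + pOf d γ W)
        * (W (Fin.castSucc (Fin.succ i)) / W 0)) U v
      = (P' / (γ - 1) + (v 0 * (S2 / U 0 ^ 2)
            + U 0 * (2 * T / U 0 ^ 2 - 2 * S2 * v 0 / U 0 ^ 3)) / 2 + P')
          * (U (Fin.castSucc (Fin.succ i)) / U 0)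
        + (pOf d γ U / (γ - 1) + U 0 * (S2 / U 0 ^ 2) / 2 + pOf d γ U)
          * ((v (Fin.castSucc (Fin.succ i)) * U 0 - U (Fin.castSucc (Fin.succ i)) * v 0)
              / U 0 ^ 2) := by
    rw [line_fderiv _ _ _ hDFl]
    have h := (((hPt.div_const (γ - 1)).fun_add (((hc0 0).fun_mul hSig).div_const 2)).fun_add hPt).fun_mul
      ((hc0 (Fin.castSucc (Fin.succ i))).fun_div (hc0 0) hne)
    rw [h.deriv]
    simp only [zero_smul, Pi.add_apply, Pi.zero_apply, add_zero]
    rw [hfoldDiv]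
  set K : ℝ := (pOf d γ U * U 0 ^ (-γ)) ^ (1 / (α + γ)) with hKdef
  set K' : ℝ := (P' * U 0 ^ (-γ) + pOf d γ U * (v 0 * (-γ) * U 0 ^ (-γ - 1)))
      * (1 / (α + γ)) * (pOf d γ U * U 0 ^ (-γ)) ^ (1 / (α + γ) - 1) with hK'def
  have hDG' : DifferentiableAt ℝ (fun W : Fin (d + 2) → ℝ =>
      W (Fin.castSucc (Fin.succ i)) / W 0
        * (β * W 0 * (pOf d γ W * W 0 ^ (-γ)) ^ (1 / (α + γ)))) U :=
    (hDV i).mul (((hDc 0).const_mul β).mul hDK)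
  have hbase' : (fun t : ℝ => pOf d γ (U + t • v) * ((U + t • v) 0) ^ (-γ)) 0 ≠ 0 := by
    simpa using ne_of_gt hbase
  have hKt := HasDerivAt.rpow_const (p := 1 / (α + γ))
    (hPt.fun_mul (HasDerivAt.rpow_const (p := -γ) (hc0 0) (Or.inl hne))) (Or.inl hbase')
  have hdG : fderiv ℝ (entropyFluxHat d γ α β i) U v
      = ((v (Fin.castSucc (Fin.succ i)) * U 0 - U (Fin.castSucc (Fin.succ i)) * v 0) / U 0 ^ 2)
          * (β * U 0 * K)
        + (U (Fin.castSucc (Fin.succ i)) / U 0) * (β * v 0 * K + β * U 0 * K') := by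
    rw [hGfun, line_fderiv _ _ _ hDG']
    have h := ((hc0 (Fin.castSucc (Fin.succ i))).fun_div (hc0 0) hne).fun_mul
      (((hc0 0).const_mul β).fun_mul hKt)
    rw [h.deriv]
    simp only [zero_smul, Pi.add_apply, Pi.zero_apply, add_zero]
    rw [hKdef, hK'def]
  -- values of the entropy variables
  have hW0 : hartenWhat d γ α U 0 = U 0 / pOf d γ U * K
      * (-(α / (γ - 1)) * (pOf d γ U / U 0) - S2 / U 0 ^ 2 / 2) := by
    rw [hKdef]
    simp only [hartenWhat, hartenW, Fin.cons_zero, vOf]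
    rw [hfoldDiv]
  have hWk : ∀ k : Fin d, hartenWhat d γ α U (Fin.castSucc (Fin.succ k))
      = U 0 / pOf d γ U * K * (U (Fin.castSucc (Fin.succ k)) / U 0) := by
    intro k
    rw [hKdef]
    simp only [hartenWhat, hartenW, vOf, ← Fin.succ_castSucc, Fin.cons_succ, Fin.snoc_castSucc]
  have hWl : hartenWhat d γ α U (Fin.last (d + 1))
      = U 0 / pOf d γ U * K * (-1) := by
    rw [hKdef]
    simp only [hartenWhat, hartenW, ← Fin.succ_last, Fin.cons_succ, Fin.snoc_last]
  clear_value S2 T P' K K'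
  -- assemble
  rw [Fin.sum_univ_succ, Fin.sum_univ_castSucc]
  simp only [Fin.succ_castSucc, Fin.succ_last, hpi]
  rw [hF0, hFl]
  simp only [hFk]
  simp only [hdk, hWk]
  rw [hd0, hdl, hdG, hW0, hWl]
  -- reduce the middle sum
  have hterm : ∀ k : Fin d,
      U 0 / pOf d γ U * K * (U (Fin.castSucc (Fin.succ k)) / U 0)
        * ((v (Fin.castSucc (Fin.succ i)) * U (Fin.castSucc (Fin.succ k))
              + U (Fin.castSucc (Fin.succ i)) * v (Fin.castSucc (Fin.succ k))) / U 0
            - U (Fin.castSucc (Fin.succ i)) * U (Fin.castSucc (Fin.succ k)) * v 0 / U 0 ^ 2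
            + (if k = i then 1 else 0) * P')
      = (K * v (Fin.castSucc (Fin.succ i)) / (pOf d γ U * U 0)
            - K * U (Fin.castSucc (Fin.succ i)) * v 0 / (pOf d γ U * U 0 ^ 2))
          * U (Fin.castSucc (Fin.succ k)) ^ 2
        + (K * U (Fin.castSucc (Fin.succ i)) / (pOf d γ U * U 0))
          * (U (Fin.castSucc (Fin.succ k)) * v (Fin.castSucc (Fin.succ k)))
        + (if k = i then U 0 / pOf d γ U * K * (U (Fin.castSucc (Fin.succ i)) / U 0) * P'
            else 0) := by
    intro k
    by_cases hk : k = i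
    · subst hk
      rw [if_pos rfl, if_pos rfl]
      field_simp
      ring
    · rw [if_neg hk, if_neg hk]
      field_simp
      ring
  rw [Finset.sum_congr rfl (fun k _ => hterm k), Finset.sum_add_distrib,
    Finset.sum_add_distrib, ← Finset.mul_sum, ← Finset.mul_sum, ← hS2def, ← hTdef,
    Finset.sum_ite_eq' Finset.univ i]
  simp only [Finset.mem_univ, if_true]
  -- final algebra
  have hL0 : U 0 ^ (-γ) ≠ 0 := (Real.rpow_pos_of_pos hρ _).ne'
  rw [hKdef, hK'def, Real.rpow_sub hbase, Real.rpow_one, Real.rpow_sub hρ, Real.rpow_one]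
  subst hβ
  field_simp
  ring
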